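/- Let n ≥ 2, 1 ≤ r < n, C = r·(binom(n-1,r-1))⁻¹, and F(s,y) = C√(1-y^(2/r))·tanh^(r-1)(s) - (n-r)·coth(s)·y on (0,∞)×[-1,1]. If τ : [s₀,∞) → [-1,1] solves τ' = F(s,τ) with τ(s₀) = 1 for some s₀ > 0, then τ'(s₀) < 0 and τ(s) > 0 for all s ≥ s₀. -/

import Mathlib

open Real Set Filter Topology

/-- The upper-wing τ-function of the hyperbolic rotational r-translating catenoid:
a solution with τ(s₀) = 1 has τ'(s₀) < 0 and stays positive on [s₀,∞). -/
theorem hyperbolic_upper_wing (n r : ℕ) (hn : 2 ≤ n) (hr1 : 1 ≤ r) (hr2 : r < n)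
    (C : ℝ) (hC : C = (r : ℝ) * ((n - 1).choose (r - 1) : ℝ)⁻¹)
    (F : ℝ → ℝ → ℝ)
    (hF : ∀ s y, F s y = C * Real.sqrt (1 - y ^ ((2 : ℝ) / r)) * Real.tanh s ^ (r - 1)
      - ((n : ℝ) - r) * (Real.cosh s / Real.sinh s) * y)
    (s₀ : ℝ) (hs₀ : 0 < s₀) (τ : ℝ → ℝ)
    (hmem : ∀ s ∈ Ici s₀, τ s ∈ Icc (-1 : ℝ) 1)
    (hode : ∀ s ∈ Ici s₀, HasDerivAt τ (F s (τ s)) s)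
    (hinit : τ s₀ = 1) :
    deriv τ s₀ < 0 ∧ ∀ s ∈ Ici s₀, 0 < τ s := by
  have hrR : (0 : ℝ) < r := by exact_mod_cast hr1
  have hC0 : 0 < C := by
    rw [hC]
    refine mul_pos hrR (inv_pos.mpr ?_)
    exact_mod_cast Nat.choose_pos (by omega : r - 1 ≤ n - 1)
  have hnr : (0 : ℝ) < (n : ℝ) - r := by
    have : (r : ℝ) < n := by exact_mod_cast hr2
    linarith
  -- F is negative at y = 1
  have hFneg : ∀ s, 0 < s → F s 1 < 0 := by
    intro s hs
    rw [hF, Real.one_rpow]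
    have hsinh : 0 < Real.sinh s := Real.sinh_pos_iff.mpr hs
    have hcosh : 0 < Real.cosh s := Real.cosh_pos s
    have : (0 : ℝ) < ((n : ℝ) - r) * (Real.cosh s / Real.sinh s) :=
      mul_pos hnr (div_pos hcosh hsinh)
    simp only [sub_self, Real.sqrt_zero, mul_zero, zero_mul, mul_one, zero_sub]
    linarith
  -- F is positive at y = 0
  have hF0 : ∀ s, 0 < s → 0 < F s 0 := by
    intro s hs
    rw [hF]
    have h2r : (2 : ℝ) / r ≠ 0 := by positivity
    rw [Real.zero_rpow h2r]
    have htanh : 0 < Real.tanh s := by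
      rw [Real.tanh_eq_sinh_div_cosh]
      exact div_pos (Real.sinh_pos_iff.mpr hs) (Real.cosh_pos s)
    simp only [sub_zero, Real.sqrt_one, mul_one, mul_zero]
    exact mul_pos (by simpa using hC0) (pow_pos htanh _)
  constructor
  · have h := hode s₀ (le_refl s₀)
    rw [hinit] at h
    rw [h.deriv]
    exact hFneg s₀ hs₀
  · -- positivity
    by_contra hcon
    push_neg at hcon
    obtain ⟨s₁, hs₁, hτs₁⟩ := hcon
    have hcont : ContinuousOn τ (Icc s₀ s₁) := fun x hx =>
      ((hode x (mem_Ici.mpr hx.1)).continuousAt).continuousWithinAt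
    set Z : Set ℝ := Icc s₀ s₁ ∩ τ ⁻¹' (Iic 0) with hZ
    have hZclosed : IsClosed Z :=
      hcont.preimage_isClosed_of_isClosed isClosed_Icc isClosed_Iic
    have hZne : Z.Nonempty := ⟨s₁, ⟨hs₁, le_refl s₁⟩, hτs₁⟩
    have hZbdd : BddBelow Z := ⟨s₀, fun x hx => hx.1.1⟩
    set t := sInf Z with ht
    have htZ : t ∈ Z := hZclosed.csInf_mem hZne hZbdd
    have hts₀ : s₀ ≤ t := htZ.1.1
    have hτt : τ t ≤ 0 := htZ.2
    have htne : s₀ ≠ t := by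
      intro h
      rw [← h, hinit] at hτt
      linarith
    have hts₀' : s₀ < t := lt_of_le_of_ne hts₀ htne
    -- for s ∈ [s₀, t), τ s > 0
    have hpos : ∀ s, s₀ ≤ s → s < t → 0 < τ s := by
      intro s hs hst
      by_contra h
      push_neg at h
      have : s ∈ Z := ⟨⟨hs, hst.le.trans htZ.1.2⟩, h⟩
      exact absurd (csInf_le hZbdd this) (not_le.mpr hst)
    -- τ t = 0 by continuity from the left
    have hτt0 : τ t = 0 := by
      refine le_antisymm hτt ?_
      have hc : ContinuousWithinAt τ (Ico s₀ t) t :=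
        ((hode t (mem_Ici.mpr hts₀)).continuousAt).continuousWithinAt
      have hne : (𝓝[Ico s₀ t] t).NeBot := by
        rw [nhdsWithin_Ico_eq_nhdsLT hts₀']
        exact nhdsLT_neBot t
      have : ∀ᶠ s in 𝓝[Ico s₀ t] t, 0 ≤ τ s := by
        filter_upwards [self_mem_nhdsWithin] with s hs
        exact (hpos s hs.1 hs.2).le
      have hc' : Filter.Tendsto τ (𝓝[Ico s₀ t] t) (𝓝 (τ t)) := hc
      exact ge_of_tendsto hc' this
    -- derivative at t is positive
    have hder : HasDerivAt τ (F t 0) t := by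
      have := hode t (mem_Ici.mpr hts₀)
      rwa [hτt0] at this
    have hFt : 0 < F t 0 := hF0 t (hs₀.trans hts₀')
    -- slope is eventually positive near t, giving τ s < τ t = 0 for s < t near t
    have hslope := (hasDerivAt_iff_tendsto_slope.mp hder).eventually
      (eventually_gt_nhds hFt)
    have hsub : 𝓝[<] t ≤ 𝓝[≠] t :=
      nhdsWithin_mono t (fun x hx => ne_of_lt hx)
    have h1 : ∀ᶠ s in 𝓝[<] t, 0 < slope τ t s := hslope.filter_mono hsub
    have h2 : Ioo s₀ t ∈ 𝓝[<] t :=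
      Ioo_mem_nhdsLT_of_mem ⟨hts₀', le_refl t⟩
    have h2' : ∀ᶠ s in 𝓝[<] t, s ∈ Ioo s₀ t := h2
    obtain ⟨s, hsl, hsIoo⟩ := (h1.and h2').exists
    have hst : s - t < 0 := by linarith [hsIoo.2]
    have hτs : 0 < τ s := hpos s hsIoo.1.le hsIoo.2
    rw [slope_def_field] at hsl
    have : τ s - τ t < 0 := by
      rcases div_pos_iff.mp hsl with ⟨h, h'⟩ | ⟨h, h'⟩
      · linarith
      · linarith
    rw [hτt0] at this
    linarith
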